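/- Let α > 1 be real and p a positive integer. For fixed t > 0, the function s ↦ ((s+p)^α + t^α)^(1/α) − (s^α + t^α)^(1/α) is strictly increasing in s on (0,∞). -/

import Mathlib

-- auxiliary: φ(x) = x^(α-1) * (x^α + t^α)^(1/α - 1) is strictly increasing on (0,∞)
lemma phi_lt (α : ℝ) (hα : 1 < α) (t : ℝ) (ht : 0 < t) {x y : ℝ}
    (hx : 0 < x) (hxy : x < y) :
    x ^ (α - 1) * (x ^ α + t ^ α) ^ (1 / α - 1) <
      y ^ (α - 1) * (y ^ α + t ^ α) ^ (1 / α - 1) := by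
  have hα0 : (0:ℝ) < α := lt_trans one_pos hα
  have hy : 0 < y := hx.trans hxy
  have hxa : 0 < x ^ α := Real.rpow_pos_of_pos hx α
  have hya : 0 < y ^ α := Real.rpow_pos_of_pos hy α
  have hta : 0 < t ^ α := Real.rpow_pos_of_pos ht α
  set c : ℝ := (α - 1) / α with hc
  have hc0 : 0 < c := div_pos (by linarith) hα0
  have key : ∀ z : ℝ, 0 < z →
      z ^ (α - 1) * (z ^ α + t ^ α) ^ (1 / α - 1)
        = (z ^ α / (z ^ α + t ^ α)) ^ c := by
    intro z hz
    have hza : 0 < z ^ α := Real.rpow_pos_of_pos hz α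
    have hsum : 0 < z ^ α + t ^ α := by positivity
    have e1 : (z ^ α) ^ c = z ^ (α - 1) := by
      rw [← Real.rpow_mul hz.le]
      congr 1
      rw [hc]; field_simp
    have hneg : (1 / α - 1 : ℝ) = -c := by
      rw [hc]; field_simp; ring
    have e2 : (z ^ α + t ^ α) ^ (1 / α - 1) = ((z ^ α + t ^ α) ^ c)⁻¹ := by
      rw [hneg, Real.rpow_neg hsum.le]
    rw [Real.div_rpow hza.le hsum.le, e1, e2, div_eq_mul_inv]
  rw [key x hx, key y hy]
  apply Real.rpow_lt_rpow (by positivity) _ hc0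
  rw [div_lt_div_iff₀ (by positivity) (by positivity)]
  have hlt : x ^ α < y ^ α := Real.rpow_lt_rpow hx.le hxy hα0
  nlinarith [hta, hlt]

theorem stmt_5 (α : ℝ) (hα : 1 < α) (p : ℕ) (hp : 0 < p) (t : ℝ) (ht : 0 < t) :
    StrictMonoOn
      (fun s : ℝ => ((s + (p : ℝ)) ^ α + t ^ α) ^ (1 / α) - (s ^ α + t ^ α) ^ (1 / α))
      (Set.Ioi (0 : ℝ)) := by
  have hα0 : (0:ℝ) < α := lt_trans one_pos hα
  have hpc : (0:ℝ) < (p : ℝ) := by exact_mod_cast hp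
  have hasD : ∀ x : ℝ, 0 < x →
      HasDerivAt (fun s : ℝ => (s ^ α + t ^ α) ^ (1 / α))
        (x ^ (α - 1) * (x ^ α + t ^ α) ^ (1 / α - 1)) x := by
    intro x hx
    have hsum : 0 < x ^ α + t ^ α := by positivity
    have h1 : HasDerivAt (fun s : ℝ => s ^ α + t ^ α) (α * x ^ (α - 1)) x :=
      (Real.hasDerivAt_rpow_const (Or.inl hx.ne')).add_const _
    have h2 : HasDerivAt (fun y : ℝ => y ^ (1 / α))
        ((1 / α) * (x ^ α + t ^ α) ^ (1 / α - 1)) (x ^ α + t ^ α) :=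
      Real.hasDerivAt_rpow_const (Or.inl hsum.ne')
    have h3 := h2.comp x h1
    refine h3.congr_deriv ?_
    have hαne : α * α⁻¹ = 1 := mul_inv_cancel₀ hα0.ne'
    linear_combination ((x ^ (α - 1) * (x ^ α + t ^ α) ^ (1 / α - 1))) * hαne
  have hasDf : ∀ x : ℝ, 0 < x →
      HasDerivAt (fun s : ℝ => ((s + (p : ℝ)) ^ α + t ^ α) ^ (1 / α) - (s ^ α + t ^ α) ^ (1 / α))
        ((x + p) ^ (α - 1) * ((x + p) ^ α + t ^ α) ^ (1 / α - 1)
          - x ^ (α - 1) * (x ^ α + t ^ α) ^ (1 / α - 1)) x := by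
    intro x hx
    have hs : HasDerivAt (fun s : ℝ => ((s + (p : ℝ)) ^ α + t ^ α) ^ (1 / α))
        ((x + p) ^ (α - 1) * ((x + p) ^ α + t ^ α) ^ (1 / α - 1)) x := by
      have h := (hasD (x + p) (by positivity)).comp x ((hasDerivAt_id x).add_const (p : ℝ))
      simpa [Function.comp_def] using h
    exact hs.sub (hasD x hx)
  apply strictMonoOn_of_deriv_pos (convex_Ioi 0)
  · intro x hx
    exact (hasDf x hx).continuousAt.continuousWithinAt
  · intro x hx
    rw [interior_Ioi] at hx
    rw [(hasDf x hx).deriv]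
    have := phi_lt α hα t ht hx (by linarith : x < x + (p : ℝ))
    linarith
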